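/- With f = X(X−1)(X−α₁)(X−α₂)(X−α₃) ∈ 𝔽_p[X] and c_k the coefficient of X^k in f^{(p−1)/2}, one has ∑_{(a,b) ∈ 𝔽_p × 𝔽_p} ( a·(1+b+a)·∏_{i=1}^{3}(α_i² + α_i·b + a) )^{(p−1)/2} = c_{p−1}·c_{2p−2} − c_{p−2}·c_{2p−1}. -/

import Mathlib

open Polynomial Finset

section AuxLemmas

lemma sum_pow_field (L : Type*) [Field L] [Fintype L] (k : ℕ) :
    ∑ x : L, x ^ k = if k ≠ 0 ∧ (Fintype.card L - 1) ∣ k then -1 else 0 := by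
  classical
  rcases eq_or_ne k 0 with rfl | hk
  · simp [Finset.card_univ, FiniteField.cast_card_eq_zero]
  have h := FiniteField.sum_pow_units L k
  have h2 : ∑ x : L, x ^ k = ∑ x : Lˣ, (x : L) ^ k := by
    rw [Finset.sum_eq_sum_sdiff_singleton_add (Finset.mem_univ (0 : L)) (fun x => x ^ k),
      zero_pow hk, add_zero]
    refine Finset.sum_nbij' (fun x => if hx : x = 0 then 1 else Units.mk0 x hx)
      (fun u => (u : L)) ?_ ?_ ?_ ?_ ?_
    · intro x hx; exact Finset.mem_univ _
    · intro u _; simp [Finset.mem_sdiff, Units.ne_zero u]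
    · intro x hx; simp only [Finset.mem_sdiff, Finset.mem_singleton] at hx
      simp [hx.2]
    · intro u _; simp [Units.ne_zero u]
    · intro x hx; simp only [Finset.mem_sdiff, Finset.mem_singleton] at hx
      simp [hx.2]
  rw [h2, h]
  simp [hk]


lemma arith1 (m k : ℕ) (hm : 2 ≤ m) (hk : k ≤ 5 * m) :
    (k ≠ 0 ∧ 2 * m ∣ k) ↔ (k = 2 * m ∨ k = 4 * m) := by
  constructor
  · rintro ⟨h0, d, rfl⟩
    have hd : d ≤ 2 := by nlinarith
    interval_cases d <;> omega
  · rintro (rfl | rfl)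
    · exact ⟨by omega, ⟨1, by ring⟩⟩
    · exact ⟨by omega, ⟨2, by ring⟩⟩

lemma arith2 (m j k : ℕ) (hm : 2 ≤ m) (hj : j ≤ 5 * m) (hk : k ≤ 5 * m)
    (hdvd : (4 * m * (m + 1)) ∣ (j + (2 * m + 1) * k)) (h0 : j + (2 * m + 1) * k ≠ 0) :
    (j = 2 * m ∧ k = 2 * m) ∨ (j = 4 * m + 1 ∧ k + 1 = 2 * m) ∨
    (j + 1 = 2 * m ∧ k = 4 * m + 1) ∨ (j = 4 * m ∧ k = 4 * m) := by
  obtain ⟨d, hd⟩ := hdvd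
  have hb1 : (2 * m + 1) * k ≤ (2 * m + 1) * (5 * m) := Nat.mul_le_mul_left _ hk
  have hd2 : d ≤ 2 := by
    by_contra h
    have h3 : 4 * m * (m + 1) * 3 ≤ 4 * m * (m + 1) * d := Nat.mul_le_mul_left _ (by omega)
    nlinarith
  have hd1 : 1 ≤ d := by
    rcases Nat.eq_zero_or_pos d with rfl | h
    · exact absurd (by omega : j + (2 * m + 1) * k = 0) h0
    · omega
  interval_cases d
  · -- j + (2m+1)k = 4m(m+1)
    have hk2 : k ≤ 2 * m := by
      by_contra h
      have : (2 * m + 1) * (2 * m + 1) ≤ (2 * m + 1) * k := Nat.mul_le_mul_left _ (by omega)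
      nlinarith
    have hk1 : 2 * m ≤ k + 1 := by
      by_contra h
      have : (2 * m + 1) * (k + 2) ≤ (2 * m + 1) * (2 * m) := Nat.mul_le_mul_left _ (by omega)
      nlinarith
    have hcase : 2 * m = k + 1 ∨ k = 2 * m := by omega
    rcases hcase with heq | rfl
    · right; left
      refine ⟨?_, by omega⟩
      zify at hd heq ⊢
      linear_combination hd + (2 * (m:ℤ) + 1) * heq
    · left
      refine ⟨?_, rfl⟩
      zify at hd ⊢
      linear_combination hd
  · -- j + (2m+1)k = 8m(m+1)
    have hk2 : k ≤ 4 * m + 1 := by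
      by_contra h
      have : (2 * m + 1) * (4 * m + 2) ≤ (2 * m + 1) * k := Nat.mul_le_mul_left _ (by omega)
      nlinarith
    have hk1 : 4 * m ≤ k := by
      by_contra h
      have : (2 * m + 1) * (k + 1) ≤ (2 * m + 1) * (4 * m) := Nat.mul_le_mul_left _ (by omega)
      nlinarith
    have hcase : k = 4 * m ∨ k = 4 * m + 1 := by omega
    rcases hcase with rfl | rfl
    · right; right; right
      refine ⟨?_, rfl⟩
      zify at hd ⊢
      linear_combination hd
    · right; right; left
      refine ⟨?_, rfl⟩
      zify at hd ⊢
      linear_combination hd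


-- generic: sum of evals in terms of coefficients and power sums
lemma sum_eval {L : Type*} [Field L] [Fintype L] (Q : L[X]) (N : ℕ) (hN : Q.natDegree < N) :
    ∑ x : L, Q.eval x
      = ∑ k ∈ Finset.range N, Q.coeff k *
          (if k ≠ 0 ∧ (Fintype.card L - 1) ∣ k then -1 else 0) := by
  classical
  have h1 : ∀ x : L, Q.eval x = ∑ k ∈ Finset.range N, Q.coeff k * x ^ k := fun x =>
    Polynomial.eval_eq_sum_range' hN x
  simp_rw [h1]
  rw [Finset.sum_comm]
  refine Finset.sum_congr rfl fun k _ => ?_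
  rw [← Finset.mul_sum, sum_pow_field]

-- double version for the quadratic extension
lemma sum_eval2 {L : Type*} [Field L] [Fintype L] (Q : L[X]) (N : ℕ) (hN : Q.natDegree < N)
    (p : ℕ) :
    ∑ x : L, Q.eval x * Q.eval (x ^ p)
      = ∑ j ∈ Finset.range N, ∑ k ∈ Finset.range N, Q.coeff j * Q.coeff k *
          (if j + p * k ≠ 0 ∧ (Fintype.card L - 1) ∣ (j + p * k) then -1 else 0) := by
  classical
  have h1 : ∀ x : L, Q.eval x * Q.eval (x ^ p)
      = ∑ j ∈ Finset.range N, ∑ k ∈ Finset.range N,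
          Q.coeff j * Q.coeff k * x ^ (j + p * k) := by
    intro x
    rw [Polynomial.eval_eq_sum_range' hN x, Polynomial.eval_eq_sum_range' hN (x ^ p),
      Finset.sum_mul_sum]
    refine Finset.sum_congr rfl fun j _ => Finset.sum_congr rfl fun k _ => ?_
    rw [← pow_mul, pow_add]
    ring
  simp_rw [h1]
  rw [Finset.sum_comm]
  refine Finset.sum_congr rfl fun j _ => ?_
  rw [Finset.sum_comm]
  refine Finset.sum_congr rfl fun k _ => ?_
  rw [← Finset.mul_sum, sum_pow_field]


section
variable {L : Type*} [Field L] [Fintype L]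

lemma sum_eval_F (m : ℕ) (hm : 2 ≤ m) (hcard : Fintype.card L = 2 * m + 1)
    (F : L[X]) (hdeg : F.natDegree < 5 * m + 1) :
    ∑ x : L, F.eval x = -(F.coeff (2 * m) + F.coeff (4 * m)) := by
  classical
  rw [sum_eval F (5 * m + 1) hdeg, hcard]
  have key : ∀ k ∈ Finset.range (5 * m + 1),
      F.coeff k * (if k ≠ 0 ∧ (2 * m + 1 - 1) ∣ k then (-1 : L) else 0)
      = (if k = 2 * m then -F.coeff k else 0) + (if k = 4 * m then -F.coeff k else 0) := by
    intro k hk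
    rw [Finset.mem_range] at hk
    have hsimp : 2 * m + 1 - 1 = 2 * m := by omega
    rw [hsimp]
    by_cases hc : k ≠ 0 ∧ 2 * m ∣ k
    · rw [if_pos hc]
      rcases (arith1 m k hm (by omega)).1 hc with rfl | rfl
      · rw [if_pos rfl, if_neg (by omega)]; ring
      · rw [if_neg (by omega), if_pos rfl]; ring
    · rw [if_neg hc]
      have h2 : ¬(k = 2 * m ∨ k = 4 * m) := fun h => hc ((arith1 m k hm (by omega)).2 h)
      push_neg at h2
      rw [if_neg h2.1, if_neg h2.2]; ring
  rw [Finset.sum_congr rfl key, Finset.sum_add_distrib,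
    Finset.sum_ite_eq' _ (2 * m) (fun k => -F.coeff k),
    Finset.sum_ite_eq' _ (4 * m) (fun k => -F.coeff k),
    if_pos (Finset.mem_range.mpr (by omega)), if_pos (Finset.mem_range.mpr (by omega))]
  ring

lemma sum_eval2_F (m : ℕ) (hm : 2 ≤ m) (hcard : Fintype.card L = 4 * m * (m + 1) + 1)
    (Q : L[X]) (hdeg : Q.natDegree < 5 * m + 1) :
    ∑ x : L, Q.eval x * Q.eval (x ^ (2 * m + 1))
      = -(Q.coeff (2 * m) * Q.coeff (2 * m) + Q.coeff (4 * m + 1) * Q.coeff (2 * m - 1)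
          + Q.coeff (2 * m - 1) * Q.coeff (4 * m + 1) + Q.coeff (4 * m) * Q.coeff (4 * m)) := by
  classical
  rw [sum_eval2 Q (5 * m + 1) hdeg (2 * m + 1), hcard]
  rw [← Finset.sum_product']
  have key : ∀ z ∈ (Finset.range (5 * m + 1)) ×ˢ (Finset.range (5 * m + 1)),
      Q.coeff z.1 * Q.coeff z.2 *
        (if z.1 + (2 * m + 1) * z.2 ≠ 0 ∧ (4 * m * (m + 1) + 1 - 1) ∣ (z.1 + (2 * m + 1) * z.2)
          then (-1 : L) else 0)
      = (if z = (2 * m, 2 * m) then -(Q.coeff z.1 * Q.coeff z.2) else 0)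
        + (if z = (4 * m + 1, 2 * m - 1) then -(Q.coeff z.1 * Q.coeff z.2) else 0)
        + (if z = (2 * m - 1, 4 * m + 1) then -(Q.coeff z.1 * Q.coeff z.2) else 0)
        + (if z = (4 * m, 4 * m) then -(Q.coeff z.1 * Q.coeff z.2) else 0) := by
    rintro ⟨j, k⟩ hz
    rw [Finset.mem_product, Finset.mem_range, Finset.mem_range] at hz
    have hsimp : 4 * m * (m + 1) + 1 - 1 = 4 * m * (m + 1) := by omega
    rw [hsimp]
    simp only [Prod.mk.injEq]
    by_cases hc : j + (2 * m + 1) * k ≠ 0 ∧ 4 * m * (m + 1) ∣ (j + (2 * m + 1) * k)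
    · rw [if_pos hc]
      rcases arith2 m j k hm (by omega) (by omega) hc.2 hc.1 with
        ⟨rfl, rfl⟩ | ⟨rfl, hk2⟩ | ⟨hj2, rfl⟩ | ⟨rfl, rfl⟩
      · rw [if_pos ⟨rfl, rfl⟩, if_neg (by omega), if_neg (by omega), if_neg (by omega)]; ring
      · have : k = 2 * m - 1 := by omega
        subst this
        rw [if_neg (by omega), if_pos ⟨rfl, rfl⟩, if_neg (by omega), if_neg (by omega)]; ring
      · have : j = 2 * m - 1 := by omega
        subst this
        rw [if_neg (by omega), if_neg (by omega), if_pos ⟨rfl, rfl⟩, if_neg (by omega)]; ring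
      · rw [if_neg (by omega), if_neg (by omega), if_neg (by omega), if_pos ⟨rfl, rfl⟩]; ring
    · rw [if_neg hc]
      have h2 : ¬((j = 2 * m ∧ k = 2 * m) ∨ (j = 4 * m + 1 ∧ k = 2 * m - 1)
          ∨ (j = 2 * m - 1 ∧ k = 4 * m + 1) ∨ (j = 4 * m ∧ k = 4 * m)) := by
        intro h
        apply hc
        have hd : j + (2 * m + 1) * k ≠ 0 ∧ 4 * m * (m + 1) ∣ (j + (2 * m + 1) * k) := by
          rcases h with ⟨rfl, rfl⟩ | ⟨rfl, rfl⟩ | ⟨rfl, rfl⟩ | ⟨rfl, rfl⟩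
          · exact ⟨by omega, ⟨1, by ring⟩⟩
          · refine ⟨by omega, ⟨1, ?_⟩⟩
            zify [show (1:ℕ) ≤ 2*m by omega]
            ring
          · refine ⟨by omega, ⟨2, ?_⟩⟩
            zify [show (1:ℕ) ≤ 2*m by omega]
            ring
          · exact ⟨by omega, ⟨2, by ring⟩⟩
        exact hd
      push_neg at h2
      obtain ⟨n1, n2, n3, n4⟩ := h2
      rw [if_neg (fun h => (n1 h.1) h.2), if_neg (fun h => (n2 h.1) h.2),
        if_neg (fun h => (n3 h.1) h.2), if_neg (fun h => (n4 h.1) h.2)]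
      ring
  rw [Finset.sum_congr rfl key]
  rw [Finset.sum_add_distrib, Finset.sum_add_distrib, Finset.sum_add_distrib]
  rw [Finset.sum_ite_eq' _ ((2 * m, 2 * m) : ℕ × ℕ),
    Finset.sum_ite_eq' _ ((4 * m + 1, 2 * m - 1) : ℕ × ℕ),
    Finset.sum_ite_eq' _ ((2 * m - 1, 4 * m + 1) : ℕ × ℕ),
    Finset.sum_ite_eq' _ ((4 * m, 4 * m) : ℕ × ℕ)]
  rw [if_pos, if_pos, if_pos, if_pos] <;>
    simp only [Finset.mem_product, Finset.mem_range] <;> try constructor <;> omega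
  ring
end


lemma root_pair {K : Type*} [Field K] {s t x y : K} (h1 : x + y = s + t) (h2 : x * y = s * t) :
    (x = s ∧ y = t) ∨ (x = t ∧ y = s) := by
  have h : (x - s) * (x - t) = 0 := by linear_combination x * h1 - h2
  rcases mul_eq_zero.mp h with h | h
  · left
    have hx : x = s := by linear_combination h
    exact ⟨hx, by linear_combination h1 - hx⟩
  · right
    have hx : x = t := by linear_combination h
    exact ⟨hx, by linear_combination h1 - hx⟩

lemma mem_range_of_frob {K : Type*} [Field K] (p : ℕ) [Fact p.Prime]
    (φ : ZMod p →+* K) (x : K) (hx : x ^ p = x) : ∃ y : ZMod p, φ y = x := by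
  classical
  have hp1 : 1 < p := (Fact.out : p.Prime).one_lt
  have hQ : (X ^ p - X : K[X]) ≠ 0 := FiniteField.X_pow_card_sub_X_ne_zero K hp1
  set R : Finset K := (X ^ p - X : K[X]).roots.toFinset with hR
  have hcardR : R.card ≤ p := by
    calc R.card ≤ Multiset.card (X ^ p - X : K[X]).roots := Multiset.toFinset_card_le _
    _ ≤ (X ^ p - X : K[X]).natDegree := Polynomial.card_roots' _
    _ = p := FiniteField.X_pow_card_sub_X_natDegree_eq K hp1
  have hS : (univ.image φ) ⊆ R := by
    intro z hz
    obtain ⟨y, _, rfl⟩ := Finset.mem_image.mp hz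
    rw [hR, Multiset.mem_toFinset, Polynomial.mem_roots hQ]
    simp only [IsRoot, eval_sub, eval_pow, eval_X]
    rw [← map_pow, ZMod.pow_card, sub_self]
  have hinj : Function.Injective φ := φ.injective
  have hcardS : (univ.image φ).card = p := by
    rw [Finset.card_image_of_injective _ hinj, Finset.card_univ, ZMod.card]
  have heq : (univ.image φ) = R := Finset.eq_of_subset_of_card_le hS (by omega)
  have hxR : x ∈ R := by
    rw [hR, Multiset.mem_toFinset, Polynomial.mem_roots hQ]
    simp only [IsRoot, eval_sub, eval_pow, eval_X]
    rw [hx, sub_self]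
  rw [← heq] at hxR
  obtain ⟨y, _, hy⟩ := Finset.mem_image.mp hxR
  exact ⟨y, hy⟩

lemma pair_classify (p : ℕ) [Fact p.Prime] (hp : 5 ≤ p) (a b : ZMod p) :
    ∃ s t : GaloisField p 2, s * t = algebraMap (ZMod p) (GaloisField p 2) a ∧
      s + t = -(algebraMap (ZMod p) (GaloisField p 2) b) := by
  classical
  haveI : Fintype (GaloisField p 2) := Fintype.ofFinite _
  set φ := algebraMap (ZMod p) (GaloisField p 2) with hφ
  have hcardK : Fintype.card (GaloisField p 2) = p ^ 2 := by
    rw [← Nat.card_eq_fintype_card, GaloisField.card p 2 (by norm_num)]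
  have hp2 : p ≠ 2 := by omega
  have hchar : ringChar (GaloisField p 2) ≠ 2 := by
    rw [ringChar.eq (GaloisField p 2) p]; exact hp2
  have hcast : ∀ n : ℕ, ((n : GaloisField p 2) = 0 ↔ p ∣ n) := fun n =>
    CharP.cast_eq_zero_iff _ p n
  have h2K : (2 : GaloisField p 2) ≠ 0 := by
    intro h
    rw [show ((2 : GaloisField p 2) = ((2 : ℕ) : GaloisField p 2)) by norm_num, hcast] at h
    have := Nat.le_of_dvd (by norm_num) h
    omega
  have h4K : (4 : GaloisField p 2) ≠ 0 := by
    intro h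
    rw [show ((4 : GaloisField p 2) = ((4 : ℕ) : GaloisField p 2)) by norm_num, hcast] at h
    have := Nat.le_of_dvd (by norm_num) h
    omega
  have hsq : ∃ δ : GaloisField p 2, δ * δ = φ (b * b - 4 * a) := by
    by_cases hD : b * b - 4 * a = 0
    · exact ⟨0, by rw [hD, map_zero, mul_zero]⟩
    · have hD' : φ (b * b - 4 * a) ≠ 0 := fun h => hD (φ.injective (by rw [h, map_zero]))
      have : IsSquare (φ (b * b - 4 * a)) := by
        rw [FiniteField.isSquare_iff hchar hD']
        obtain ⟨m, hm⟩ := (Fact.out : p.Prime).odd_of_ne_two hp2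
        have e0 : ∀ n : ℕ, (2 * n + 1) / 2 = n := fun n => by omega
        have e1 : Fintype.card (GaloisField p 2) / 2 = (p - 1) * (m + 1) := by
          rw [hcardK, hm]
          have : (2 * m + 1) ^ 2 = 2 * (2 * m * (m + 1)) + 1 := by ring
          rw [this, e0]
          have h21 : 2 * m + 1 - 1 = 2 * m := by omega
          rw [h21]
        rw [e1, pow_mul, ← map_pow, ZMod.pow_card_sub_one_eq_one hD, map_one, one_pow]
      obtain ⟨r, hr⟩ := this
      exact ⟨r, hr.symm⟩
  obtain ⟨δ, hδ⟩ := hsq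
  rw [map_sub, map_mul, map_mul, map_ofNat] at hδ
  refine ⟨(-φ b + δ) / 2, (-φ b - δ) / 2, ?_, ?_⟩
  · have e2 : ((-φ b + δ) / 2) * ((-φ b - δ) / 2) = (φ b * φ b - δ * δ) / 4 := by
      field_simp
      ring
    rw [e2, hδ]
    have e3 : φ b * φ b - (φ b * φ b - 4 * φ a) = 4 * φ a := by ring
    rw [e3]
    exact mul_div_cancel_left₀ _ h4K
  · field_simp
    ring


lemma fiber_sum (p : ℕ) [Fact p.Prime] (hp : 5 ≤ p) (a b : ZMod p)
    (s t : GaloisField p 2)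
    (hst1 : s * t = algebraMap (ZMod p) (GaloisField p 2) a)
    (hst2 : s + t = -(algebraMap (ZMod p) (GaloisField p 2) b))
    (E : GaloisField p 2 → GaloisField p 2)
    (S₁ : Finset (ZMod p × ZMod p)) (S₂ : Finset (GaloisField p 2))
    (hS₁ : ∀ z : ZMod p × ZMod p, z ∈ S₁ ↔ (z.1 * z.2 = a ∧ z.1 + z.2 = -b))
    (hS₂ : ∀ x : GaloisField p 2, x ∈ S₂ ↔
      (x * x ^ p = algebraMap (ZMod p) (GaloisField p 2) a ∧
       x + x ^ p = -(algebraMap (ZMod p) (GaloisField p 2) b))) :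
    (∑ z ∈ S₁, E (algebraMap (ZMod p) (GaloisField p 2) z.1)
        * E (algebraMap (ZMod p) (GaloisField p 2) z.2))
      + (∑ x ∈ S₂, E x * E (x ^ p))
    = 2 * (E s * E t) := by
  classical
  set φ := algebraMap (ZMod p) (GaloisField p 2) with hφ
  have hinj : Function.Injective φ := φ.injective
  have hqr : ∀ x y : GaloisField p 2, x * y = φ a → x + y = -φ b →
      (x = s ∧ y = t) ∨ (x = t ∧ y = s) := by
    intro x y h1 h2
    exact root_pair (by rw [h2, hst2]) (by rw [h1, hst1])
  have h2K : (2 : GaloisField p 2) ≠ 0 := by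
    intro h
    rw [show ((2 : GaloisField p 2) = ((2 : ℕ) : GaloisField p 2)) by norm_num,
      CharP.cast_eq_zero_iff _ p] at h
    have := Nat.le_of_dvd (by norm_num) h
    omega
  by_cases hs : ∃ u, φ u = s
  · obtain ⟨u, hu⟩ := hs
    have hsp : s ^ p = s := by rw [← hu, ← map_pow, ZMod.pow_card]
    have ht' : φ (-b - u) = t := by
      rw [map_sub, map_neg, hu]
      linear_combination -hst2
    have htp : t ^ p = t := by rw [← ht', ← map_pow, ZMod.pow_card]
    by_cases hst : s = t
    · have hS₁' : S₁ = {(u, u)} := by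
        ext z
        rw [hS₁, Finset.mem_singleton]
        constructor
        · rintro ⟨h1, h2⟩
          have h1' : φ z.1 * φ z.2 = φ a := by rw [← map_mul, h1]
          have h2' : φ z.1 + φ z.2 = -φ b := by rw [← map_add, h2, map_neg]
          have hz1 : ∀ w : ZMod p, φ w = s → w = u := fun w hw => hinj (by rw [hw, hu])
          have hz2 : ∀ w : ZMod p, φ w = t → w = u := fun w hw => hinj (by rw [hw, ← hst, hu])
          rcases hqr _ _ h1' h2' with ⟨e1, e2⟩ | ⟨e1, e2⟩
          · exact Prod.ext (hz1 _ e1) (hz2 _ e2)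
          · exact Prod.ext (hz2 _ e1) (hz1 _ e2)
        · rintro rfl
          constructor
          · apply hinj; rw [map_mul, hu, ← hst1, hst]
          · apply hinj; rw [map_add, hu, map_neg, ← hst2, hst]
      have hS₂' : S₂ = {s} := by
        ext x
        rw [hS₂, Finset.mem_singleton]
        constructor
        · rintro ⟨h1, h2⟩
          rcases hqr _ _ h1 h2 with ⟨e1, _⟩ | ⟨e1, _⟩
          · exact e1
          · rw [e1, hst]
        · rintro rfl
          rw [hsp]
          constructor
          · nth_rewrite 2 [hst]; exact hst1
          · nth_rewrite 2 [hst]; exact hst2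
      rw [hS₁', hS₂', Finset.sum_singleton, Finset.sum_singleton, hu, hsp, ← hst]
      ring
    · have huv : u ≠ (-b - u) := fun h => hst (by rw [← hu, h, ht'])
      have hS₁' : S₁ = {(u, -b - u), (-b - u, u)} := by
        ext z
        rw [hS₁, Finset.mem_insert, Finset.mem_singleton]
        constructor
        · rintro ⟨h1, h2⟩
          have h1' : φ z.1 * φ z.2 = φ a := by rw [← map_mul, h1]
          have h2' : φ z.1 + φ z.2 = -φ b := by rw [← map_add, h2, map_neg]
          have hz1 : ∀ w : ZMod p, φ w = s → w = u := fun w hw => hinj (by rw [hw, hu])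
          have hz2 : ∀ w : ZMod p, φ w = t → w = -b - u := fun w hw => hinj (by rw [hw, ht'])
          rcases hqr _ _ h1' h2' with ⟨e1, e2⟩ | ⟨e1, e2⟩
          · exact Or.inl (Prod.ext (hz1 _ e1) (hz2 _ e2))
          · exact Or.inr (Prod.ext (hz2 _ e1) (hz1 _ e2))
        · rintro (rfl | rfl)
          · constructor
            · apply hinj; rw [map_mul, hu, ht', hst1]
            · apply hinj; rw [map_add, hu, ht', map_neg, hst2]
          · constructor
            · apply hinj; rw [map_mul, hu, ht', mul_comm, hst1]
            · apply hinj; rw [map_add, hu, ht', map_neg, add_comm, hst2]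
      have hS₂' : S₂ = ∅ := by
        ext x
        rw [hS₂]
        simp only [Finset.notMem_empty, iff_false, not_and]
        intro h1 h2
        rcases hqr _ _ h1 h2 with ⟨e1, e2⟩ | ⟨e1, e2⟩
        · have h3 : s ^ p = t := by rw [← e1, e2]
          rw [hsp] at h3
          exact hst h3
        · have h3 : t ^ p = s := by rw [← e1, e2]
          rw [htp] at h3
          exact hst h3.symm
      rw [hS₁', hS₂', Finset.sum_empty, Finset.sum_insert (by
        simp only [Finset.mem_singleton, Prod.mk.injEq, not_and]
        intro h; exact absurd h huv), Finset.sum_singleton, hu, ht']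
      ring
  · -- s is not in the prime field
    have h2Z : (2 : ZMod p) ≠ 0 := by
      intro h2
      rw [show ((2 : ZMod p) = ((2 : ℕ) : ZMod p)) by norm_num,
        CharP.cast_eq_zero_iff _ p] at h2
      have := Nat.le_of_dvd (by norm_num) h2
      omega
    have hst : s ≠ t := by
      intro h
      apply hs
      refine ⟨-b / 2, ?_⟩
      apply mul_left_cancel₀ h2K
      have e1 : (2 : GaloisField p 2) * φ (-b / 2) = φ (2 * (-b / 2)) := by
        rw [map_mul, map_ofNat]
      have e2 : (2 : ZMod p) * (-b / 2) = -b := by field_simp <;> ring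
      rw [e1, e2, map_neg, ← hst2, ← h]
      ring
    have hoddp : Odd p := (Fact.out : p.Prime).odd_of_ne_two (by omega)
    have hbp : (φ b) ^ p = φ b := by rw [← map_pow, ZMod.pow_card]
    have hap : (φ a) ^ p = φ a := by rw [← map_pow, ZMod.pow_card]
    have h1 : s ^ p * t ^ p = φ a := by rw [← mul_pow, hst1, hap]
    have h2 : s ^ p + t ^ p = -φ b := by
      rw [← add_pow_char, hst2, Odd.neg_pow hoddp, hbp]
    rcases hqr _ _ h1 h2 with ⟨e1, e2⟩ | ⟨e1, e2⟩
    · exact absurd (mem_range_of_frob p φ s e1) hs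
    · have hS₁' : S₁ = ∅ := by
        ext z
        rw [hS₁]
        simp only [Finset.notMem_empty, iff_false, not_and]
        intro h1' h2'
        have h1'' : φ z.1 * φ z.2 = φ a := by rw [← map_mul, h1']
        have h2'' : φ z.1 + φ z.2 = -φ b := by rw [← map_add, h2', map_neg]
        rcases hqr _ _ h1'' h2'' with ⟨f1, _⟩ | ⟨f1, _⟩
        · exact hs ⟨z.1, f1⟩
        · exact hs ⟨z.1 ^ p, by rw [map_pow, f1, e2]⟩
      have hS₂' : S₂ = {s, t} := by
        ext x
        rw [hS₂, Finset.mem_insert, Finset.mem_singleton]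
        constructor
        · rintro ⟨h1', h2'⟩
          rcases hqr _ _ h1' h2' with ⟨f1, _⟩ | ⟨f1, _⟩
          · exact Or.inl f1
          · exact Or.inr f1
        · rintro (rfl | rfl)
          · rw [e1]; exact ⟨hst1, hst2⟩
          · rw [e2]; exact ⟨by rw [mul_comm, hst1], by rw [add_comm, hst2]⟩
      rw [hS₁', hS₂', Finset.sum_empty, Finset.sum_insert (by simpa using hst),
        Finset.sum_singleton, e1, e2]
      ring


end AuxLemmas

/-- For the quintic `f = X(X-1)(X-α₁)(X-α₂)(X-α₃)` over `𝔽_p`, one has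
`∑_{(a,b)} (a(1+b+a)∏ᵢ(αᵢ² + αᵢb + a))^((p-1)/2) = c_{p-1} c_{2p-2} - c_{p-2} c_{2p-1}`. -/
theorem double_sum_eq_det (p : ℕ) [Fact p.Prime] (hp : 5 ≤ p)
    (α₁ α₂ α₃ : ZMod p)
    (h12 : α₁ ≠ α₂) (h13 : α₁ ≠ α₃) (h23 : α₂ ≠ α₃)
    (h10 : α₁ ≠ 0) (h20 : α₂ ≠ 0) (h30 : α₃ ≠ 0)
    (h11 : α₁ ≠ 1) (h21 : α₂ ≠ 1) (h31 : α₃ ≠ 1)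
    (f : Polynomial (ZMod p))
    (hf : f = X * (X - 1) * (X - C α₁) * (X - C α₂) * (X - C α₃))
    (c : ℕ → ZMod p) (hc : ∀ k, c k = (f ^ ((p - 1) / 2)).coeff k) :
    ∑ z : ZMod p × ZMod p,
      (z.1 * (1 + z.2 + z.1) *
        ((α₁ ^ 2 + α₁ * z.2 + z.1) * (α₂ ^ 2 + α₂ * z.2 + z.1) *
          (α₃ ^ 2 + α₃ * z.2 + z.1))) ^ ((p - 1) / 2) =
      c (p - 1) * c (2 * p - 2) - c (p - 2) * c (2 * p - 1) := by
  classical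
  obtain ⟨m, hm2, hpm⟩ : ∃ m, 2 ≤ m ∧ p = 2 * m + 1 := by
    obtain ⟨m, hm⟩ := (Fact.out : p.Prime).odd_of_ne_two (by omega)
    exact ⟨m, by omega, hm⟩
  have hMm : (p - 1) / 2 = m := by omega
  have hoddp : Odd p := ⟨m, by omega⟩
  haveI : Fintype (GaloisField p 2) := Fintype.ofFinite _
  set φ := algebraMap (ZMod p) (GaloisField p 2) with hφdef
  have hinj : Function.Injective φ := φ.injective
  set F := f ^ ((p - 1) / 2) with hFdef
  set Q := F.map φ with hQdef
  -- degrees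
  have hmonf : f.Monic := by
    rw [hf, show (1 : (ZMod p)[X]) = C 1 from C_1.symm]
    exact (((monic_X.mul (monic_X_sub_C 1)).mul (monic_X_sub_C α₁)).mul
      (monic_X_sub_C α₂)).mul (monic_X_sub_C α₃)
  have hdf : f.natDegree = 5 := by
    rw [hf]
    compute_degree!
  have hdF : F.natDegree < 5 * m + 1 := by
    rw [hFdef, hmonf.natDegree_pow, hdf, hMm]
    omega
  have hdQ : Q.natDegree < 5 * m + 1 := lt_of_le_of_lt natDegree_map_le hdF
  -- cardinalities
  have hcardK : Fintype.card (GaloisField p 2) = 4 * m * (m + 1) + 1 := by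
    rw [← Nat.card_eq_fintype_card, GaloisField.card p 2 (by norm_num), hpm]
    ring
  have hcardZ : Fintype.card (ZMod p) = 2 * m + 1 := by rw [ZMod.card, hpm]
  -- frobenius facts
  have hfix : ∀ x : GaloisField p 2, (x ^ p) ^ p = x := by
    intro x
    have h := FiniteField.pow_card x
    rw [hcardK] at h
    rw [← pow_mul, show p * p = 4 * m * (m + 1) + 1 from by rw [hpm]; ring]
    exact h
  set ψ := Function.invFun φ with hψdef
  have hψφ : ∀ y, ψ (φ y) = y := Function.leftInverse_invFun hinj
  have hφψ : ∀ x : GaloisField p 2, (∃ y, φ y = x) → φ (ψ x) = x := fun x hx =>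
    Function.invFun_eq hx
  have hfixmul : ∀ x : GaloisField p 2, ∃ y, φ y = x * x ^ p := fun x =>
    mem_range_of_frob p φ _ (by rw [mul_pow, hfix]; ring)
  have hfixadd : ∀ x : GaloisField p 2, ∃ y, φ y = -(x + x ^ p) := fun x =>
    mem_range_of_frob p φ _ (by rw [Odd.neg_pow hoddp, add_pow_char, hfix]; ring)
  set ν : GaloisField p 2 → ZMod p × ZMod p :=
    fun x => (ψ (x * x ^ p), ψ (-(x + x ^ p))) with hνdef
  have hνiff : ∀ (x : GaloisField p 2) (ab : ZMod p × ZMod p),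
      ν x = ab ↔ (x * x ^ p = φ ab.1 ∧ x + x ^ p = -(φ ab.2)) := by
    intro x ab
    constructor
    · intro h
      rw [Prod.ext_iff] at h
      have h1 : φ (ψ (x * x ^ p)) = x * x ^ p := hφψ _ (hfixmul x)
      have h2 : φ (ψ (-(x + x ^ p))) = -(x + x ^ p) := hφψ _ (hfixadd x)
      constructor
      · rw [← h.1]; exact h1.symm
      · have : φ ab.2 = -(x + x ^ p) := by rw [← h.2]; exact h2
        rw [this, neg_neg]
    · rintro ⟨h1, h2⟩
      have e2 : -(x + x ^ p) = φ ab.2 := by rw [h2, neg_neg]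
      have : ν x = (ψ (φ ab.1), ψ (φ ab.2)) := by
        rw [show ν x = (ψ (x * x ^ p), ψ (-(x + x ^ p))) from rfl, h1, e2]
      rw [this, hψφ, hψφ]
  -- the pointwise identity
  have key : ∀ ab : ZMod p × ZMod p,
      2 * φ ((ab.1 * (1 + ab.2 + ab.1) *
        ((α₁ ^ 2 + α₁ * ab.2 + ab.1) * (α₂ ^ 2 + α₂ * ab.2 + ab.1) *
          (α₃ ^ 2 + α₃ * ab.2 + ab.1))) ^ ((p - 1) / 2))
      = (∑ z ∈ univ.filter (fun z : ZMod p × ZMod p => (z.1 * z.2, -(z.1 + z.2)) = ab),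
          Q.eval (φ z.1) * Q.eval (φ z.2))
        + (∑ x ∈ univ.filter (fun x : GaloisField p 2 => ν x = ab),
          Q.eval x * Q.eval (x ^ p)) := by
    intro ab
    obtain ⟨s, t, hst1, hst2⟩ := pair_classify p hp ab.1 ab.2
    rw [fiber_sum p hp ab.1 ab.2 s t hst1 hst2 (fun x => Q.eval x) _ _ ?_ ?_]
    rotate_left
    · intro z
      simp only [Finset.mem_filter, Finset.mem_univ, true_and, Prod.ext_iff]
      constructor
      · rintro ⟨u1, u2⟩
        exact ⟨u1, by rw [← u2]; ring⟩
      · rintro ⟨u1, u2⟩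
        exact ⟨u1, by rw [u2]; ring⟩
    · intro x
      simp only [Finset.mem_filter, Finset.mem_univ, true_and]
      exact hνiff x ab
    -- 2 * φ (summand) = 2 * (Q.eval s * Q.eval t)
    congr 1
    have hQeval : ∀ x : GaloisField p 2, Q.eval x = ((f.map φ).eval x) ^ ((p - 1) / 2) := by
      intro x
      rw [hQdef, hFdef, Polynomial.map_pow, eval_pow]
    have hfeval : ∀ x : GaloisField p 2, (f.map φ).eval x
        = x * (x - 1) * (x - φ α₁) * (x - φ α₂) * (x - φ α₃) := by
      intro x
      rw [hf]
      simp only [Polynomial.map_mul, Polynomial.map_sub, Polynomial.map_one, map_X, map_C,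
        eval_mul, eval_sub, eval_X, eval_C, eval_one]
    have ha' : φ ab.1 = s * t := hst1.symm
    have hb' : φ ab.2 = -(s + t) := by linear_combination hst2
    simp only [map_pow, map_mul, map_add, map_one]
    rw [hQeval, hQeval, hfeval, hfeval, ← mul_pow]
    congr 1
    rw [ha', hb']
    ring
  -- assemble
  have h2Z : (2 : ZMod p) ≠ 0 := by
    intro h2
    rw [show ((2 : ZMod p) = ((2 : ℕ) : ZMod p)) by norm_num,
      ZMod.natCast_eq_zero_iff] at h2
    have := Nat.le_of_dvd (by norm_num) h2
    omega
  have e0 : (φ 2 : GaloisField p 2) = 2 := by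
    rw [show (2 : ZMod p) = ((1 : ZMod p) + 1) from by norm_num, map_add, map_one]
    norm_num
  have hQφ : ∀ u : ZMod p, Q.eval (φ u) = φ (F.eval u) := by
    intro u
    rw [hQdef, eval_map, Polynomial.eval₂_at_apply]
  have t1 : ∑ z : ZMod p × ZMod p, Q.eval (φ z.1) * Q.eval (φ z.2)
      = φ (-(F.coeff (2 * m) + F.coeff (4 * m))) * φ (-(F.coeff (2 * m) + F.coeff (4 * m))) := by
    rw [Fintype.sum_prod_type,
      ← Fintype.sum_mul_sum (fun a : ZMod p => Q.eval (φ a)) (fun a : ZMod p => Q.eval (φ a))]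
    simp_rw [hQφ]
    rw [← map_sum, sum_eval_F m hm2 hcardZ F hdF]
  have t2 : ∑ x : GaloisField p 2, Q.eval x * Q.eval (x ^ p)
      = -(Q.coeff (2 * m) * Q.coeff (2 * m) + Q.coeff (4 * m + 1) * Q.coeff (2 * m - 1)
          + Q.coeff (2 * m - 1) * Q.coeff (4 * m + 1) + Q.coeff (4 * m) * Q.coeff (4 * m)) := by
    have h := sum_eval2_F m hm2 hcardK Q hdQ
    rw [← hpm] at h
    exact h
  apply mul_left_cancel₀ h2Z
  apply hinj
  rw [map_mul, map_sum, e0, Finset.mul_sum]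
  calc ∑ ab : ZMod p × ZMod p, 2 * φ ((ab.1 * (1 + ab.2 + ab.1) *
        ((α₁ ^ 2 + α₁ * ab.2 + ab.1) * (α₂ ^ 2 + α₂ * ab.2 + ab.1) *
          (α₃ ^ 2 + α₃ * ab.2 + ab.1))) ^ ((p - 1) / 2))
      = ∑ ab : ZMod p × ZMod p,
          ((∑ z ∈ univ.filter (fun z : ZMod p × ZMod p => (z.1 * z.2, -(z.1 + z.2)) = ab),
            Q.eval (φ z.1) * Q.eval (φ z.2))
          + (∑ x ∈ univ.filter (fun x : GaloisField p 2 => ν x = ab),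
            Q.eval x * Q.eval (x ^ p))) := Finset.sum_congr rfl (fun ab _ => key ab)
    _ = (∑ ab : ZMod p × ZMod p,
          ∑ z ∈ univ.filter (fun z : ZMod p × ZMod p => (z.1 * z.2, -(z.1 + z.2)) = ab),
            Q.eval (φ z.1) * Q.eval (φ z.2))
        + (∑ ab : ZMod p × ZMod p,
          ∑ x ∈ univ.filter (fun x : GaloisField p 2 => ν x = ab),
            Q.eval x * Q.eval (x ^ p)) := Finset.sum_add_distrib
    _ = (∑ z : ZMod p × ZMod p, Q.eval (φ z.1) * Q.eval (φ z.2))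
        + (∑ x : GaloisField p 2, Q.eval x * Q.eval (x ^ p)) := by
        rw [Finset.sum_fiberwise, Finset.sum_fiberwise]
    _ = φ (2 * (c (p - 1) * c (2 * p - 2) - c (p - 2) * c (2 * p - 1))) := by
        rw [t1, t2]
        have i1 : p - 1 = 2 * m := by omega
        have i2 : 2 * p - 2 = 4 * m := by omega
        have i3 : p - 2 = 2 * m - 1 := by omega
        have i4 : 2 * p - 1 = 4 * m + 1 := by omega
        rw [hc, hc, hc, hc, i1, i2, i3, i4]
        simp only [hQdef, Polynomial.coeff_map]
        rw [map_mul, e0, map_sub, map_mul, map_mul, map_neg, map_add]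
        ring
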